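/- Let G be a group, k a field, N ≥ 2, and R₁, R₂ : G → GL_N(k) two representations such that R₁ and R₂ agree on the commutator subgroup G' of G, and the restriction of R₂ to G' is absolutely irreducible. Then there exists a group homomorphism (character) η : G → kˣ such that R₂(g) = η(g) • R₁(g) for all g ∈ G. -/

import Mathlib

open Matrix

/-- Let `G` be a group, `k` a field, `N ≥ 2`, and `R₁, R₂ : G → GL_N(k)` two representations
agreeing on the commutator subgroup `G'` of `G`, such that the restriction of `R₂` to `G'` is
absolutely irreducible (its image spans the full matrix algebra `M_N(k)`). Then there is a
character `η : G → kˣ` with `R₂ = R₁ ⊗ η`. -/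
theorem stmt_0 (G : Type*) [Group G] (k : Type*) [Field k] (N : ℕ) (hN : 2 ≤ N)
    (R₁ R₂ : G →* GL (Fin N) k)
    (hagree : ∀ g ∈ commutator G, R₁ g = R₂ g)
    (hirr : Submodule.span k {m : Matrix (Fin N) (Fin N) k |
      ∃ g ∈ commutator G, m = (R₂ g : Matrix (Fin N) (Fin N) k)} = ⊤) :
    ∃ η : G →* kˣ, ∀ g : G,
      (R₂ g : Matrix (Fin N) (Fin N) k) = (η g : k) • (R₁ g : Matrix (Fin N) (Fin N) k) := by
  have i0 : Fin N := ⟨0, by omega⟩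
  -- A g commutes with every R₂ c in GL
  have hAcomm : ∀ g : G, ∀ c ∈ commutator G,
      (R₂ c) * ((R₁ g)⁻¹ * R₂ g) = ((R₁ g)⁻¹ * R₂ g) * (R₂ c) := by
    intro g c hc
    have hc' : g * c * g⁻¹ ∈ commutator G :=
      (Subgroup.commutator_normal ⊤ ⊤).conj_mem c hc g
    have h1 := hagree _ hc'
    have h2 := hagree c hc
    simp only [_root_.map_mul, map_inv, h2] at h1
    -- h1 : R₁ g * R₂ c * (R₁ g)⁻¹ = R₂ g * R₂ c * (R₂ g)⁻¹
    calc R₂ c * ((R₁ g)⁻¹ * R₂ g)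
        = (R₁ g)⁻¹ * (R₁ g * R₂ c * (R₁ g)⁻¹) * R₂ g := by group
      _ = (R₁ g)⁻¹ * (R₂ g * R₂ c * (R₂ g)⁻¹) * R₂ g := by rw [h1]
      _ = ((R₁ g)⁻¹ * R₂ g) * R₂ c := by group
  -- hence A g commutes with every matrix
  have hcentral : ∀ g : G, ∀ m : Matrix (Fin N) (Fin N) k,
      m * (((R₁ g)⁻¹ * R₂ g : GL (Fin N) k) : Matrix (Fin N) (Fin N) k)
        = (((R₁ g)⁻¹ * R₂ g : GL (Fin N) k) : Matrix (Fin N) (Fin N) k) * m := by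
    intro g m
    have hm : m ∈ Submodule.span k {m : Matrix (Fin N) (Fin N) k |
        ∃ g ∈ commutator G, m = (R₂ g : Matrix (Fin N) (Fin N) k)} := by
      rw [hirr]; trivial
    induction hm using Submodule.span_induction with
    | mem x hx =>
      obtain ⟨c, hc, rfl⟩ := hx
      have := congrArg (Units.val) (hAcomm g c hc)
      simpa [Units.val_mul] using this
    | zero => simp only [zero_mul, mul_zero]
    | add x y _ _ hx hy => simp only [add_mul, mul_add, hx, hy]
    | smul a x _ hx => simp only [smul_mul_assoc, mul_smul_comm, hx]
  -- so A g is a scalar matrix with nonzero scalar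
  have key : ∀ g : G, ∃ r : kˣ,
      (R₂ g : Matrix (Fin N) (Fin N) k) = (r : k) • (R₁ g : Matrix (Fin N) (Fin N) k) := by
    intro g
    obtain ⟨r, hr⟩ : (((R₁ g)⁻¹ * R₂ g : GL (Fin N) k) : Matrix (Fin N) (Fin N) k)
        ∈ Set.range (Matrix.scalar (Fin N)) :=
      mem_range_scalar_of_commute_single (fun i j _ => (hcentral g _))
    have hr' : (((R₁ g)⁻¹ * R₂ g : GL (Fin N) k) : Matrix (Fin N) (Fin N) k)
        = r • (1 : Matrix (Fin N) (Fin N) k) := by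
      rw [← hr, scalar_apply, smul_one_eq_diagonal]
    have hrne : r ≠ 0 := by
      intro h0
      have := hr'
      rw [h0, zero_smul] at this
      have h1 : (((R₁ g)⁻¹ * R₂ g : GL (Fin N) k) : Matrix (Fin N) (Fin N) k)
          * ((((R₁ g)⁻¹ * R₂ g : GL (Fin N) k))⁻¹ : GL (Fin N) k) = 1 := by
        rw [← Units.val_mul, mul_inv_cancel]; rfl
      rw [this, zero_mul] at h1
      have := congrFun (congrFun h1 i0) i0
      simp at this
    refine ⟨Units.mk0 r hrne, ?_⟩
    have : (R₂ g : Matrix (Fin N) (Fin N) k)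
        = (R₁ g : Matrix (Fin N) (Fin N) k)
          * (((R₁ g)⁻¹ * R₂ g : GL (Fin N) k) : Matrix (Fin N) (Fin N) k) := by
      rw [← Units.val_mul]
      congr 1
      group
    rw [this, hr', mul_smul_comm, mul_one]
    rfl
  choose c hc using key
  -- uniqueness of the scalar
  have huniq : ∀ (g : G) (r s : kˣ),
      (r : k) • (R₁ g : Matrix (Fin N) (Fin N) k) = (s : k) • (R₁ g : Matrix (Fin N) (Fin N) k)
        → r = s := by
    intro g r s h
    have h2 := congrArg (fun m => m * (((R₁ g)⁻¹ : GL (Fin N) k) : Matrix (Fin N) (Fin N) k)) h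
    simp only [smul_mul_assoc, ← Units.val_mul, mul_inv_cancel] at h2
    have h3 := congrFun (congrFun h2 i0) i0
    simp only [Matrix.smul_apply] at h3
    have h4 : ((1 : GL (Fin N) k) : Matrix (Fin N) (Fin N) k) i0 i0 = 1 := by
      simp [Units.val_one]
    rw [h4] at h3
    ext
    simpa using h3
  have hmul : ∀ g h : G, c (g * h) = c g * c h := by
    intro g h
    apply huniq (g * h)
    rw [← hc (g * h)]
    have e1 : R₂ (g * h) = R₂ g * R₂ h := _root_.map_mul R₂ g h
    have e2 : R₁ (g * h) = R₁ g * R₁ h := _root_.map_mul R₁ g h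
    rw [e1, e2, Units.val_mul, Units.val_mul, hc g, hc h, Units.val_mul,
      smul_mul_assoc, mul_smul_comm, smul_smul]
  exact ⟨MonoidHom.mk' c hmul, hc⟩
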